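/- Let R > 0 be a real number and m ≥ n ≥ 1 be integers. Then R_{m,n} ≥ R if and only if for every real polynomial f of degree at most n satisfying f(j) ≥ 0 for all j = 0, 1, …, m, one has ∫ f dμ_R ≥ 0, i.e., e^{−R} Σ_{j=0}^{∞} f(j) R^j/j! ≥ 0. -/

import Mathlib

open Polynomial

noncomputable section

/-- A polynomial is absolutely monotonic on `[a, b]` if all of its derivatives
(including the 0th) are nonnegative at every point of `[a, b]`. -/
def AbsolutelyMonotonicOn (φ : Polynomial ℝ) (a b : ℝ) : Prop :=
  ∀ (k : ℕ), ∀ x ∈ Set.Icc a b, 0 ≤ (Polynomial.derivative^[k] φ).eval x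

/-- The set `Π_{m,n}` of real polynomials of degree at most `m` with
`φ^{(k)}(0) = 1` for `k = 0, 1, …, n`. -/
def PiSet (m n : ℕ) : Set (Polynomial ℝ) :=
  {φ : Polynomial ℝ | φ.natDegree ≤ m ∧ ∀ k ≤ n, (Polynomial.derivative^[k] φ).eval 0 = 1}

/-- The threshold factor `R(φ)`. -/
def thresholdFactor (φ : Polynomial ℝ) : ℝ :=
  sSup {r : ℝ | r = 0 ∨ (0 < r ∧ AbsolutelyMonotonicOn φ (-r) 0)}

/-- The optimal threshold factor `R_{m,n}`. -/
def Ropt (m n : ℕ) : ℝ :=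
  sSup (thresholdFactor '' PiSet m n)

/-- Integral of a polynomial against the Poisson–Charlier measure `μ_R`. -/
def pcInt (R : ℝ) (f : Polynomial ℝ) : ℝ :=
  ∑' j : ℕ, Real.exp (-R) * f.eval (j : ℝ) * R ^ j / (Nat.factorial j : ℝ)

/-! ### Auxiliary lemmas -/

lemma iter_deriv_linear_pow (u w : ℝ) (j k : ℕ) :
    derivative^[k] ((C u * X + C w) ^ j) =
      C ((j.descFactorial k : ℝ) * u ^ k) * (C u * X + C w) ^ (j - k) := by
  induction k with
  | zero => simp
  | succ k ih =>
    rw [Function.iterate_succ_apply', ih]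
    have hd : derivative ((C u * X + C w) ^ (j - k)) =
        C ((j - k : ℕ) * u) * (C u * X + C w) ^ (j - k - 1) := by
      rw [derivative_pow]
      simp only [derivative_add, derivative_mul, derivative_C, derivative_X, zero_mul, mul_one,
        zero_add, add_zero, map_mul, Polynomial.C_eq_natCast]
      ring
    rw [derivative_mul, hd, derivative_C, zero_mul, zero_add]
    have hj : j - (k+1) = j - k - 1 := by omega
    rw [← mul_assoc, ← C_mul, hj, Nat.descFactorial_succ]
    congr 2
    push_cast
    ring

lemma descFactorial_add (i k : ℕ) :
    ((i + k).descFactorial k) * i.factorial = (i + k).factorial := by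
  have := Nat.factorial_mul_descFactorial (n := i + k) (k := k) (Nat.le_add_left k i)
  simpa [Nat.add_sub_cancel, Nat.mul_comm] using this

lemma summable_desc (R : ℝ) (k : ℕ) :
    Summable (fun j : ℕ => Real.exp (-R) * (j.descFactorial k : ℝ) * R ^ j / j.factorial) := by
  rw [← summable_nat_add_iff k]
  have : (fun i : ℕ =>
        Real.exp (-R) * ((i + k).descFactorial k : ℝ) * R ^ (i + k) / (i + k).factorial)
      = fun i : ℕ => (Real.exp (-R) * R ^ k) * (R ^ i / i.factorial) := by
    funext i
    have h : ((i + k).descFactorial k : ℝ) * i.factorial = (i + k).factorial := by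
      exact_mod_cast congrArg (Nat.cast : ℕ → ℝ) (descFactorial_add i k)
    have hfac : ((i+k).factorial : ℝ) ≠ 0 := Nat.cast_ne_zero.mpr (Nat.factorial_ne_zero _)
    have hfi : (i.factorial : ℝ) ≠ 0 := Nat.cast_ne_zero.mpr (Nat.factorial_ne_zero _)
    field_simp
    rw [pow_add]
    linear_combination (R ^ i * R ^ k) * h
  rw [this]
  exact (Real.summable_pow_div_factorial R).mul_left _

lemma tsum_desc (R : ℝ) (k : ℕ) :
    (∑' j : ℕ, Real.exp (-R) * (j.descFactorial k : ℝ) * R ^ j / j.factorial) = R ^ k := by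
  have hs := summable_desc R k
  have h0 : ∀ i ∈ Finset.range k,
      Real.exp (-R) * (i.descFactorial k : ℝ) * R ^ i / i.factorial = 0 := by
    intro i hi
    rw [Nat.descFactorial_eq_zero_iff_lt.mpr (Finset.mem_range.mp hi)]
    simp
  have key := (Summable.sum_add_tsum_nat_add k hs).symm
  rw [key, Finset.sum_eq_zero h0, zero_add]
  have : (fun i : ℕ =>
        Real.exp (-R) * ((i + k).descFactorial k : ℝ) * R ^ (i + k) / (i + k).factorial)
      = fun i : ℕ => (Real.exp (-R) * R ^ k) * (R ^ i / i.factorial) := by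
    funext i
    have h : ((i + k).descFactorial k : ℝ) * i.factorial = (i + k).factorial := by
      exact_mod_cast congrArg (Nat.cast : ℕ → ℝ) (descFactorial_add i k)
    have hfac : ((i+k).factorial : ℝ) ≠ 0 := Nat.cast_ne_zero.mpr (Nat.factorial_ne_zero _)
    have hfi : (i.factorial : ℝ) ≠ 0 := Nat.cast_ne_zero.mpr (Nat.factorial_ne_zero _)
    field_simp
    rw [pow_add]
    linear_combination (R ^ i * R ^ k) * h
  rw [this, tsum_mul_left]
  have hexp : (∑' i : ℕ, R ^ i / (i.factorial : ℝ)) = Real.exp R := by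
    rw [Real.exp_eq_exp_ℝ, NormedSpace.exp_eq_tsum_div]
  rw [hexp]
  have h1 : Real.exp (-R) * Real.exp R = 1 := by rw [← Real.exp_add]; simp
  linear_combination (R ^ k) * h1

lemma desc_span_mem (n : ℕ) (f : ℝ[X]) (hf : f.natDegree ≤ n) :
    f ∈ Submodule.span ℝ (Set.range fun k : Fin (n+1) => descPochhammer ℝ (k : ℕ)) := by
  generalize hd : f.natDegree = d at *
  induction d using Nat.strong_induction_on generalizing f with
  | _ d ih =>
    by_cases h0 : f = 0
    · simp [h0]
    set k := f.natDegree with hk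
    have hkd : k = d := hd
    set g := f - f.leadingCoeff • descPochhammer ℝ k with hg
    have hmem : descPochhammer ℝ k ∈ Submodule.span ℝ
        (Set.range fun k : Fin (n+1) => descPochhammer ℝ (k : ℕ)) := by
      apply Submodule.subset_span
      exact ⟨⟨k, by omega⟩, rfl⟩
    have hdp : (f.leadingCoeff • descPochhammer ℝ k).natDegree = k := by
      rw [smul_eq_C_mul, natDegree_C_mul (by simpa [leadingCoeff_eq_zero] using h0),
        descPochhammer_natDegree]
    have hlc : (f.leadingCoeff • descPochhammer ℝ k).coeff k = f.leadingCoeff := by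
      rw [smul_eq_C_mul, coeff_C_mul]
      have := (monic_descPochhammer ℝ k).coeff_natDegree
      rw [descPochhammer_natDegree] at this
      rw [this, mul_one]
    by_cases hgz : g = 0
    · have : f = f.leadingCoeff • descPochhammer ℝ k := by
        rw [← sub_eq_zero]; exact hgz
      rw [this]
      exact Submodule.smul_mem _ _ hmem
    have hglt : g.natDegree < k := by
      have hle : g.natDegree ≤ k := le_trans (natDegree_sub_le _ _) (by simp [hdp]; exact le_rfl)
      rcases lt_or_eq_of_le hle with h | h
      · exact h
      exfalso
      have hck : g.coeff k = 0 := by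
        rw [hg, coeff_sub, hlc, Polynomial.coeff_natDegree, sub_self]
      have hne := Polynomial.leadingCoeff_ne_zero.mpr hgz
      rw [Polynomial.leadingCoeff, h] at hne
      exact hne hck
    have hkpos : 0 < k := by
      rcases Nat.eq_zero_or_pos k with hk0 | hkpos
      · omega
      · exact hkpos
    have hfg : f = g + f.leadingCoeff • descPochhammer ℝ k := by ring
    rw [hfg]
    apply Submodule.add_mem
    · exact ih g.natDegree (by omega) g rfl (by omega)
    · exact Submodule.smul_mem _ _ hmem

lemma desc_basis_rep (n : ℕ) (f : ℝ[X]) (hf : f.natDegree ≤ n) :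
    ∃ c : Fin (n+1) → ℝ, f = ∑ k : Fin (n+1), c k • descPochhammer ℝ (k : ℕ) := by
  obtain ⟨c, hc⟩ := (Submodule.mem_span_range_iff_exists_fun ℝ).1 (desc_span_mem n f hf)
  exact ⟨c, hc.symm⟩

lemma pcInt_comb (R : ℝ) {n : ℕ} (c : Fin (n+1) → ℝ) :
    pcInt R (∑ k : Fin (n+1), c k • descPochhammer ℝ (k : ℕ))
      = ∑ k : Fin (n+1), c k * R ^ (k : ℕ) := by
  unfold pcInt
  have hfun : ∀ j : ℕ,
      Real.exp (-R) * (∑ k : Fin (n+1), c k • descPochhammer ℝ (k:ℕ)).eval (j:ℝ)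
          * R ^ j / j.factorial
      = ∑ k : Fin (n+1),
          c k * (Real.exp (-R) * ((j).descFactorial (k:ℕ) : ℝ) * R ^ j / j.factorial) := by
    intro j
    rw [Polynomial.eval_finset_sum, Finset.mul_sum, Finset.sum_mul, Finset.sum_div]
    refine Finset.sum_congr rfl fun k _ => ?_
    rw [Polynomial.eval_smul, descPochhammer_eval_eq_descFactorial, smul_eq_mul]
    ring
  rw [tsum_congr hfun,
    Summable.tsum_finsetSum (f := fun (k : Fin (n+1)) (j : ℕ) =>
      c k * (Real.exp (-R) * ((j).descFactorial (k:ℕ) : ℝ) * R ^ j / j.factorial))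
      (fun k _ => ((summable_desc R k).mul_left (c k)))]
  refine Finset.sum_congr rfl fun k _ => ?_
  rw [tsum_mul_left, tsum_desc]

lemma taylor_expand (φ : ℝ[X]) (r : ℝ) (N : ℕ) (hN : φ.natDegree < N) :
    φ = ∑ j ∈ Finset.range N, C ((taylor (-r) φ).coeff j) * (X + C r) ^ j := by
  conv_lhs => rw [← Polynomial.sum_taylor_eq φ (-r)]
  rw [Polynomial.sum_over_range' _ (fun i => by simp) N (by rwa [Polynomial.natDegree_taylor])]
  refine Finset.sum_congr rfl fun j _ => ?_
  congr 2
  simp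

lemma iter_deriv_eval (φ : ℝ[X]) (r : ℝ) (N : ℕ) (hN : φ.natDegree < N) (k : ℕ) (x : ℝ) :
    (derivative^[k] φ).eval x
      = ∑ j ∈ Finset.range N,
          (taylor (-r) φ).coeff j * ((j.descFactorial k : ℝ)) * (x + r) ^ (j - k) := by
  conv_lhs => rw [taylor_expand φ r N hN]
  rw [Polynomial.iterate_derivative_sum, Polynomial.eval_finset_sum]
  refine Finset.sum_congr rfl fun j _ => ?_
  rw [Polynomial.iterate_derivative_C_mul]
  have hX : (X + C r : ℝ[X]) = C 1 * X + C r := by rw [map_one, one_mul]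
  rw [hX, iter_deriv_linear_pow]
  simp [mul_comm, mul_assoc, mul_left_comm]

lemma taylor_coeff_nonneg (φ : ℝ[X]) (r : ℝ) (hr : 0 < r)
    (habs : AbsolutelyMonotonicOn φ (-r) 0) (j : ℕ) :
    0 ≤ (taylor (-r) φ).coeff j := by
  rw [Polynomial.taylor_coeff]
  have h := habs j (-r) ⟨le_refl _, by linarith⟩
  have hsm : (j.factorial : ℕ) • (Polynomial.hasseDeriv j φ) = derivative^[j] φ := by
    have := Polynomial.factorial_smul_hasseDeriv (R := ℝ) (k := j)
    exact congrFun this φ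
  have : (j.factorial : ℝ) * (Polynomial.hasseDeriv j φ).eval (-r)
      = (derivative^[j] φ).eval (-r) := by
    rw [← hsm]
    simp [Polynomial.eval_smul]
  nlinarith [(Nat.cast_pos (α := ℝ)).mpr (Nat.factorial_pos j), this]

lemma moments_of_absMono (m n : ℕ) (φ : ℝ[X]) (hφm : φ.natDegree ≤ m)
    (hder : ∀ k ≤ n, (derivative^[k] φ).eval 0 = 1) (r : ℝ) (hr : 0 < r)
    (habs : AbsolutelyMonotonicOn φ (-r) 0) :
    ∃ a : Fin (m+1) → ℝ, (∀ j, 0 ≤ a j) ∧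
      ∀ k ≤ n, ∑ j : Fin (m+1), a j * (((j:ℕ).descFactorial k : ℝ)) = r ^ k := by
  set T := taylor (-r) φ with hT
  refine ⟨fun j => T.coeff j * r ^ (j : ℕ), fun j => mul_nonneg (taylor_coeff_nonneg φ r hr habs j)
    (pow_nonneg hr.le _), fun k hk => ?_⟩
  have h1 := hder k hk
  rw [iter_deriv_eval φ r (m+1) (by omega) k 0] at h1
  rw [Fin.sum_univ_eq_sum_range (fun j => T.coeff j * r ^ j * ((j.descFactorial k : ℝ)))]
  have : ∀ j ∈ Finset.range (m+1), T.coeff j * r ^ j * ((j.descFactorial k : ℝ))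
      = r ^ k * (T.coeff j * ((j.descFactorial k : ℝ)) * (0 + r) ^ (j - k)) := by
    intro j _
    rcases lt_or_ge j k with h | h
    · rw [Nat.descFactorial_eq_zero_iff_lt.mpr h]
      simp
    · rw [zero_add, ← Nat.sub_add_cancel h, pow_add]
      ring_nf
      rw [Nat.sub_add_cancel h]
      ring
  rw [Finset.sum_congr rfl this, ← Finset.mul_sum, h1, mul_one]

lemma absMono_of_moments (m n : ℕ) (R : ℝ) (hR : 0 < R) (a : Fin (m+1) → ℝ)
    (ha : ∀ j, 0 ≤ a j)
    (hmom : ∀ k ≤ n, ∑ j : Fin (m+1), a j * (((j:ℕ).descFactorial k : ℝ)) = R ^ k) :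
    ∃ φ : ℝ[X], φ.natDegree ≤ m ∧ (∀ k ≤ n, (derivative^[k] φ).eval 0 = 1) ∧
      AbsolutelyMonotonicOn φ (-R) 0 := by
  set p : ℝ[X] := C R⁻¹ * X + C 1 with hp
  refine ⟨∑ j : Fin (m+1), C (a j) * p ^ (j : ℕ), ?_, ?_, ?_⟩
  · apply Polynomial.natDegree_sum_le_of_forall_le
    intro j _
    calc (C (a j) * p ^ (j:ℕ)).natDegree ≤ (C (a j)).natDegree + (p ^ (j:ℕ)).natDegree :=
          Polynomial.natDegree_mul_le
    _ ≤ 0 + (j:ℕ) * p.natDegree := by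
        gcongr
        · simp
        · exact Polynomial.natDegree_pow_le
    _ ≤ m := by
        have hpd : p.natDegree ≤ 1 := by
          apply le_trans (Polynomial.natDegree_add_le _ _)
          simp [Polynomial.natDegree_C_mul_le]
          exact Polynomial.natDegree_C_mul_le _ _ |>.trans (by simp)
        have := j.isLt
        nlinarith [j.isLt, hpd]
  · intro k hk
    rw [Polynomial.iterate_derivative_sum, Polynomial.eval_finset_sum]
    have : ∀ j : Fin (m+1),
        (derivative^[k] (C (a j) * p ^ (j:ℕ))).eval 0
          = a j * (((j:ℕ).descFactorial k : ℝ)) * R⁻¹ ^ k := by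
      intro j
      rw [Polynomial.iterate_derivative_C_mul, iter_deriv_linear_pow]
      simp only [Polynomial.eval_mul, Polynomial.eval_C, Polynomial.eval_pow]
      rw [show (C R⁻¹ * X + C 1 : ℝ[X]).eval 0 = 1 by simp]
      ring
    rw [Finset.sum_congr rfl (fun j _ => this j)]
    rw [show (∑ j : Fin (m+1), a j * (((j:ℕ).descFactorial k : ℝ)) * R⁻¹ ^ k)
        = (∑ j : Fin (m+1), a j * (((j:ℕ).descFactorial k : ℝ))) * R⁻¹ ^ k from
      (Finset.sum_mul _ _ _).symm]
    rw [hmom k hk, ← mul_pow, mul_inv_cancel₀ hR.ne', one_pow]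
  · intro k x hx
    rw [Polynomial.iterate_derivative_sum, Polynomial.eval_finset_sum]
    apply Finset.sum_nonneg
    intro j _
    rw [Polynomial.iterate_derivative_C_mul, iter_deriv_linear_pow]
    simp only [Polynomial.eval_mul, Polynomial.eval_C, Polynomial.eval_pow]
    have hpe : 0 ≤ (C R⁻¹ * X + C 1 : ℝ[X]).eval x := by
      simp only [Polynomial.eval_add, Polynomial.eval_mul, Polynomial.eval_C, Polynomial.eval_X,
        Polynomial.eval_one]
      have h1 : -R ≤ x := hx.1
      have hinv : R⁻¹ * R = 1 := inv_mul_cancel₀ hR.ne'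
      have hinvpos : 0 < R⁻¹ := by positivity
      nlinarith [mul_le_mul_of_nonneg_left (show -x ≤ R by linarith) hinvpos.le]
    have h1 : (0:ℝ) ≤ a j := ha j
    have h2 : (0:ℝ) ≤ (((j:ℕ).descFactorial k : ℝ)) := Nat.cast_nonneg _
    positivity

lemma cone_isClosed (n m : ℕ) (v : Fin (m+1) → (Fin (n+1) → ℝ)) (hv0 : ∀ j, v j 0 = 1) :
    IsClosed {y : Fin (n+1) → ℝ | ∃ a : Fin (m+1) → ℝ, (∀ j, 0 ≤ a j) ∧ y = ∑ j, a j • v j} := by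
  set K := {y : Fin (n+1) → ℝ | ∃ a : Fin (m+1) → ℝ, (∀ j, 0 ≤ a j) ∧ y = ∑ j, a j • v j} with hK
  have hL : Continuous (fun a : Fin (m+1) → ℝ => ∑ j, a j • v j) :=
    continuous_finset_sum _ fun j _ => (continuous_apply j).smul continuous_const
  apply IsSeqClosed.isClosed
  intro x y hx hxy
  choose a ha hxa using hx
  have happ : ∀ i, x i 0 = ∑ j, a i j := by
    intro i
    rw [hxa i]
    simp [Finset.sum_apply, hv0]
  have h0 : Filter.Tendsto (fun i => x i 0) Filter.atTop (nhds (y 0)) :=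
    (continuous_apply (0 : Fin (n+1))).continuousAt.tendsto.comp hxy
  obtain ⟨C, hC⟩ := h0.bddAbove_range
  have hCb : ∀ i, x i 0 ≤ C := fun i => hC (Set.mem_range_self i)
  have hmemT : ∀ i, a i ∈ Set.pi Set.univ (fun _ : Fin (m+1) => Set.Icc (0:ℝ) C) := by
    intro i j _
    refine ⟨ha i j, ?_⟩
    calc a i j ≤ ∑ j', a i j' :=
          Finset.single_le_sum (fun j' _ => ha i j') (Finset.mem_univ j)
    _ = x i 0 := (happ i).symm
    _ ≤ C := hCb i
  have hTcomp : IsCompact (Set.pi Set.univ (fun _ : Fin (m+1) => Set.Icc (0:ℝ) C)) :=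
    isCompact_univ_pi fun _ => isCompact_Icc
  obtain ⟨α, hαT, ψ, hψ, hconv⟩ := hTcomp.tendsto_subseq hmemT
  refine ⟨α, fun j => (hαT j (Set.mem_univ j)).1, ?_⟩
  have h1 : Filter.Tendsto (fun i => ∑ j, a (ψ i) j • v j) Filter.atTop
      (nhds (∑ j, α j • v j)) := (hL.continuousAt.tendsto).comp hconv
  have h2 : Filter.Tendsto (fun i => x (ψ i)) Filter.atTop (nhds y) :=
    hxy.comp hψ.tendsto_atTop
  have : (fun i => x (ψ i)) = fun i => ∑ j, a (ψ i) j • v j := by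
    funext i; exact hxa (ψ i)
  rw [this] at h2
  exact tendsto_nhds_unique h2 h1

lemma cone_convex (n m : ℕ) (v : Fin (m+1) → (Fin (n+1) → ℝ)) :
    Convex ℝ {y : Fin (n+1) → ℝ | ∃ a : Fin (m+1) → ℝ, (∀ j, 0 ≤ a j) ∧ y = ∑ j, a j • v j} := by
  rintro y1 ⟨a1, ha1, rfl⟩ y2 ⟨a2, ha2, rfl⟩ s t hs ht hst
  refine ⟨fun j => s * a1 j + t * a2 j,
    fun j => add_nonneg (mul_nonneg hs (ha1 j)) (mul_nonneg ht (ha2 j)), ?_⟩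
  rw [Finset.smul_sum, Finset.smul_sum, ← Finset.sum_add_distrib]
  refine Finset.sum_congr rfl fun j _ => ?_
  rw [add_smul, smul_smul, smul_smul]

lemma farkas (n m : ℕ) (v : Fin (m+1) → (Fin (n+1) → ℝ)) (hv0 : ∀ j, v j 0 = 1)
    (b : Fin (n+1) → ℝ)
    (h : ∀ c : (Fin (n+1) → ℝ) →L[ℝ] ℝ, (∀ j, 0 ≤ c (v j)) → 0 ≤ c b) :
    ∃ a : Fin (m+1) → ℝ, (∀ j, 0 ≤ a j) ∧ b = ∑ j, a j • v j := by
  by_contra hb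
  have hbK : b ∉ {y : Fin (n+1) → ℝ | ∃ a : Fin (m+1) → ℝ, (∀ j, 0 ≤ a j) ∧ y = ∑ j, a j • v j} :=
    hb
  obtain ⟨f, u, hfb, hfy⟩ := geometric_hahn_banach_point_closed (cone_convex n m v)
    (cone_isClosed n m v hv0) hbK
  have h0K : (0 : Fin (n+1) → ℝ) ∈ {y : Fin (n+1) → ℝ |
      ∃ a : Fin (m+1) → ℝ, (∀ j, 0 ≤ a j) ∧ y = ∑ j, a j • v j} :=
    ⟨0, fun j => le_refl 0, by simp⟩
  have hu0 : u < 0 := by simpa using hfy 0 h0K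
  have hfv : ∀ j, 0 ≤ f (v j) := by
    intro j
    by_contra hneg
    push_neg at hneg
    set t : ℝ := u / f (v j) with hts
    have ht : 0 < t := div_pos_of_neg_of_neg hu0 hneg
    have htv : t • v j ∈ {y : Fin (n+1) → ℝ |
        ∃ a : Fin (m+1) → ℝ, (∀ j, 0 ≤ a j) ∧ y = ∑ j, a j • v j} := by
      refine ⟨fun i => if i = j then t else 0, fun i => by positivity, ?_⟩
      rw [Finset.sum_eq_single j]
      · simp
      · intro i _ hij; simp [hij]
      · intro hji; exact absurd (Finset.mem_univ j) hji
    have := hfy _ htv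
    rw [map_smul, smul_eq_mul, hts, div_mul_cancel₀ _ (ne_of_lt hneg)] at this
    exact lt_irrefl u this
  have := h f hfv
  linarith

lemma clm_eval (n : ℕ) (c : (Fin (n+1) → ℝ) →L[ℝ] ℝ) (y : Fin (n+1) → ℝ) :
    c y = ∑ k : Fin (n+1), y k * c (Pi.single k 1) := by
  have hy : y = ∑ k : Fin (n+1), Pi.single k (y k) := (Finset.univ_sum_single y).symm
  conv_lhs => rw [hy]
  rw [map_sum]
  refine Finset.sum_congr rfl fun k _ => ?_
  have hsing : Pi.single k (y k) = y k • (Pi.single k (1:ℝ) : Fin (n+1) → ℝ) := by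
    rw [← Pi.single_smul, smul_eq_mul, mul_one]
  rw [hsing, map_smul, smul_eq_mul]

lemma S_bound (m n : ℕ) (hn : 1 ≤ n) (φ : ℝ[X]) (hφ : φ ∈ PiSet m n) :
    ∀ r ∈ {r : ℝ | r = 0 ∨ (0 < r ∧ AbsolutelyMonotonicOn φ (-r) 0)}, r ≤ (m : ℝ) := by
  rintro r (rfl | ⟨hr, habs⟩)
  · exact Nat.cast_nonneg m
  obtain ⟨a, ha, hmom⟩ := moments_of_absMono m n φ hφ.1 hφ.2 r hr habs
  have h0 := hmom 0 (Nat.zero_le n)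
  have h1 := hmom 1 hn
  simp only [Nat.descFactorial_zero, Nat.cast_one, mul_one, pow_zero] at h0
  simp only [Nat.descFactorial_one, pow_one] at h1
  calc r = ∑ j : Fin (m+1), a j * ((j:ℕ) : ℝ) := h1.symm
  _ ≤ ∑ j : Fin (m+1), a j * (m : ℝ) := by
      refine Finset.sum_le_sum fun j _ => ?_
      have : ((j:ℕ) : ℝ) ≤ (m : ℝ) := by exact_mod_cast Nat.lt_succ_iff.mp j.isLt
      exact mul_le_mul_of_nonneg_left this (ha j)
  _ = (m : ℝ) := by rw [← Finset.sum_mul, h0, one_mul]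

lemma thresholdFactor_le (m n : ℕ) (hn : 1 ≤ n) (φ : ℝ[X]) (hφ : φ ∈ PiSet m n) :
    thresholdFactor φ ≤ (m : ℝ) :=
  csSup_le ⟨0, Or.inl rfl⟩ (S_bound m n hn φ hφ)

theorem statement14 (m n : ℕ) (hn : 1 ≤ n) (hmn : n ≤ m) (R : ℝ) (hR : 0 < R) :
    R ≤ Ropt m n ↔
      ∀ f : Polynomial ℝ, f.natDegree ≤ n →
        (∀ j : ℕ, j ≤ m → 0 ≤ f.eval (j : ℝ)) → 0 ≤ pcInt R f := by
  constructor
  · -- forward direction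
    intro hRle f hfdeg hfpos
    obtain ⟨c, hc⟩ := desc_basis_rep n f hfdeg
    have hpc : pcInt R f = ∑ k : Fin (n+1), c k * R ^ (k:ℕ) := by rw [hc, pcInt_comb]
    have heval : ∀ j : ℕ, f.eval (j:ℝ)
        = ∑ k : Fin (n+1), c k * ((j.descFactorial (k:ℕ)) : ℝ) := by
      intro j
      rw [hc, Polynomial.eval_finset_sum]
      refine Finset.sum_congr rfl fun k _ => ?_
      rw [Polynomial.eval_smul, descPochhammer_eval_eq_descFactorial, smul_eq_mul]
    set g : ℝ → ℝ := fun r => ∑ k : Fin (n+1), c k * r ^ (k:ℕ) with hgdef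
    have key : ∀ r ∈ Set.Ioo (0:ℝ) R, 0 ≤ g r := by
      intro r hr
      -- extract an absolutely monotonic polynomial with threshold > r
      have hne : (thresholdFactor '' PiSet m n).Nonempty := by
        by_contra hemp
        rw [Set.not_nonempty_iff_eq_empty] at hemp
        have : Ropt m n = 0 := by rw [Ropt, hemp, Real.sSup_empty]
        linarith
      obtain ⟨t, ⟨φ, hφ, rfl⟩, hrt⟩ := exists_lt_of_lt_csSup hne (lt_of_lt_of_le hr.2 hRle)
      have hrt' : r < sSup {s : ℝ | s = 0 ∨ (0 < s ∧ AbsolutelyMonotonicOn φ (-s) 0)} := hrt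
      obtain ⟨s, hs, hrs⟩ := exists_lt_of_lt_csSup
        (⟨0, Or.inl rfl⟩ : {s : ℝ | s = 0 ∨ (0 < s ∧ AbsolutelyMonotonicOn φ (-s) 0)}.Nonempty)
        hrt'
      rcases hs with rfl | ⟨hspos, habs⟩
      · linarith [hr.1]
      have habsr : AbsolutelyMonotonicOn φ (-r) 0 := fun k x hx =>
        habs k x ⟨by linarith [hx.1], hx.2⟩
      obtain ⟨a, ha, hmom⟩ := moments_of_absMono m n φ hφ.1 hφ.2 r hr.1 habsr
      have hsum : ∑ j : Fin (m+1), a j * f.eval ((j:ℕ) : ℝ) = g r := by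
        calc ∑ j : Fin (m+1), a j * f.eval ((j:ℕ) : ℝ)
            = ∑ j : Fin (m+1), ∑ k : Fin (n+1),
                c k * (a j * (((j:ℕ).descFactorial (k:ℕ)) : ℝ)) := by
              refine Finset.sum_congr rfl fun j _ => ?_
              rw [heval, Finset.mul_sum]
              refine Finset.sum_congr rfl fun k _ => ?_
              ring
        _ = ∑ k : Fin (n+1), c k * ∑ j : Fin (m+1), a j * (((j:ℕ).descFactorial (k:ℕ)) : ℝ) := by
              rw [Finset.sum_comm]
              refine Finset.sum_congr rfl fun k _ => ?_
              rw [Finset.mul_sum]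
        _ = g r := by
              refine Finset.sum_congr rfl fun k _ => ?_
              rw [hmom (k:ℕ) (Nat.lt_succ_iff.mp k.isLt)]
      rw [← hsum]
      refine Finset.sum_nonneg fun j _ => mul_nonneg (ha j) ?_
      exact hfpos (j:ℕ) (Nat.lt_succ_iff.mp j.isLt)
    -- take the limit r → R⁻
    have hgc : Continuous g := by
      apply continuous_finset_sum
      intro k _
      exact (continuous_const.mul (continuous_pow _))
    have hRcl : R ∈ closure (Set.Ioo (0:ℝ) R) := by
      rw [closure_Ioo hR.ne]
      exact ⟨hR.le, le_refl R⟩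
    have hnb : (nhdsWithin R (Set.Ioo (0:ℝ) R)).NeBot :=
      mem_closure_iff_nhdsWithin_neBot.mp hRcl
    have htend : Filter.Tendsto g (nhdsWithin R (Set.Ioo (0:ℝ) R)) (nhds (g R)) :=
      (hgc.tendsto R).mono_left nhdsWithin_le_nhds
    have : 0 ≤ g R := by
      refine ge_of_tendsto htend ?_
      filter_upwards [self_mem_nhdsWithin] with r hr
      exact key r hr
    rwa [hpc]
  · -- backward direction
    intro hpos
    set v : Fin (m+1) → (Fin (n+1) → ℝ) :=
      fun j k => (((j:ℕ).descFactorial (k:ℕ)) : ℝ) with hv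
    set b : Fin (n+1) → ℝ := fun k => R ^ (k:ℕ) with hbdef
    have hv0 : ∀ j, v j 0 = 1 := by
      intro j
      simp [hv]
    have hfark : ∃ a : Fin (m+1) → ℝ, (∀ j, 0 ≤ a j) ∧ b = ∑ j, a j • v j := by
      apply farkas n m v hv0 b
      intro c hcv
      set γ : Fin (n+1) → ℝ := fun k => c (Pi.single k 1) with hγ
      set g : ℝ[X] := ∑ k : Fin (n+1), γ k • descPochhammer ℝ (k:ℕ) with hgp
      have hgdeg : g.natDegree ≤ n := by
        apply Polynomial.natDegree_sum_le_of_forall_le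
        intro k _
        refine le_trans (Polynomial.natDegree_smul_le _ _) ?_
        rw [descPochhammer_natDegree]
        exact Nat.lt_succ_iff.mp k.isLt
      have hgeval : ∀ j : ℕ, g.eval (j:ℝ)
          = ∑ k : Fin (n+1), γ k * ((j.descFactorial (k:ℕ)) : ℝ) := by
        intro j
        rw [hgp, Polynomial.eval_finset_sum]
        refine Finset.sum_congr rfl fun k _ => ?_
        rw [Polynomial.eval_smul, descPochhammer_eval_eq_descFactorial, smul_eq_mul]
      have hgpos : ∀ j : ℕ, j ≤ m → 0 ≤ g.eval (j:ℝ) := by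
        intro j hj
        rw [hgeval]
        have := hcv ⟨j, by omega⟩
        rw [clm_eval n c (v ⟨j, by omega⟩)] at this
        convert this using 1
        refine Finset.sum_congr rfl fun k _ => ?_
        rw [mul_comm]
      have := hpos g hgdeg hgpos
      rw [hgp, pcInt_comb] at this
      rw [clm_eval n c b]
      convert this using 1
      refine Finset.sum_congr rfl fun k _ => ?_
      rw [mul_comm]
    obtain ⟨a, ha, hab⟩ := hfark
    have hmom : ∀ k ≤ n, ∑ j : Fin (m+1), a j * (((j:ℕ).descFactorial k : ℝ)) = R ^ k := by
      intro k hk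
      have := congrFun hab ⟨k, by omega⟩
      rw [hbdef] at this
      simp only [Finset.sum_apply, Pi.smul_apply, smul_eq_mul] at this
      rw [← this]
    obtain ⟨φ, hφdeg, hφder, hφabs⟩ := absMono_of_moments m n R hR a ha hmom
    have hφPi : φ ∈ PiSet m n := ⟨hφdeg, hφder⟩
    have hRS : R ∈ {r : ℝ | r = 0 ∨ (0 < r ∧ AbsolutelyMonotonicOn φ (-r) 0)} :=
      Or.inr ⟨hR, hφabs⟩
    have h1 : R ≤ thresholdFactor φ :=
      le_csSup ⟨(m:ℝ), S_bound m n hn φ hφPi⟩ hRS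
    have h2 : thresholdFactor φ ≤ Ropt m n := by
      apply le_csSup
      · exact ⟨(m:ℝ), fun t ⟨ψ, hψ, ht⟩ => ht ▸ thresholdFactor_le m n hn ψ hψ⟩
      · exact Set.mem_image_of_mem _ hφPi
    linarith
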